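/- Let 𝕂 be a Krein space with fundamental symmetry J and let {(W_i, v_i) : i ∈ I} be a J-fusion frame for 𝕂. Then {(W_i, v_i) : i ∈ I_±} is a fusion frame for the Hilbert space (M_±, ±[·,·]); that is, there exist constants −∞ < B₋ ≤ A₋ < 0 < A₊ ≤ B₊ < ∞ such that A_±[f,f] ≤ Σ_{i∈I_±} v_i² |[π_{W_i}(Jf), f]| ≤ B_±[f,f] for every f ∈ M_±. -/

import Mathlib

noncomputable section

open scoped InnerProductSpace ENNReal

attribute [local instance] Classical.propDecidable

namespace JFF

instance : Fact ((1 : ℝ≥0∞) ≤ 2) := ⟨by norm_num⟩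

variable {𝕂 : Type*} [NormedAddCommGroup 𝕂] [InnerProductSpace ℂ 𝕂] [CompleteSpace 𝕂]
variable {ι : Type*}

/-- The indefinite inner product `[x, y]` induced by the fundamental symmetry `J`;
with Mathlib's convention (inner products conjugate-linear in the *first* variable),
the paper's `[x, y] = ⟨Jx, y⟩`, which is linear in `x`, is `⟪J y, x⟫_ℂ`. -/
def ip (J : 𝕂 →L[ℂ] 𝕂) (x y : 𝕂) : ℂ := @inner ℂ _ _ (J y) x

/-- `J` is a fundamental symmetry: a bounded selfadjoint operator with `J ∘ J = 1`. -/
def IsFundSym (J : 𝕂 →L[ℂ] 𝕂) : Prop := IsSelfAdjoint J ∧ J ∘L J = 1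

/-- `W` is a `J`-nonnegative subspace. -/
def JNonneg (J : 𝕂 →L[ℂ] 𝕂) (W : Submodule ℂ 𝕂) : Prop :=
  ∀ f ∈ W, 0 ≤ (ip J f f).re

/-- `W` is a `J`-nonpositive subspace. -/
def JNonpos (J : 𝕂 →L[ℂ] 𝕂) (W : Submodule ℂ 𝕂) : Prop :=
  ∀ f ∈ W, (ip J f f).re ≤ 0

/-- `W` is a `J`-negative subspace. -/
def JNeg (J : 𝕂 →L[ℂ] 𝕂) (W : Submodule ℂ 𝕂) : Prop :=
  ∀ f ∈ W, f ≠ 0 → (ip J f f).re < 0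

/-- `W` is uniformly `J`-positive. -/
def UnifJPos (J : 𝕂 →L[ℂ] 𝕂) (W : Submodule ℂ 𝕂) : Prop :=
  ∃ α : ℝ, 0 < α ∧ ∀ f ∈ W, α * ‖f‖ ^ 2 ≤ (ip J f f).re

/-- `W` is uniformly `J`-negative. -/
def UnifJNeg (J : 𝕂 →L[ℂ] 𝕂) (W : Submodule ℂ 𝕂) : Prop :=
  ∃ α : ℝ, 0 < α ∧ ∀ f ∈ W, (ip J f f).re ≤ -(α * ‖f‖ ^ 2)

/-- `W` is maximal uniformly `J`-positive. -/
def MaxUnifJPos (J : 𝕂 →L[ℂ] 𝕂) (W : Submodule ℂ 𝕂) : Prop :=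
  UnifJPos J W ∧ ∀ W' : Submodule ℂ 𝕂, UnifJPos J W' → W ≤ W' → W' = W

/-- `W` is maximal uniformly `J`-negative. -/
def MaxUnifJNeg (J : 𝕂 →L[ℂ] 𝕂) (W : Submodule ℂ 𝕂) : Prop :=
  UnifJNeg J W ∧ ∀ W' : Submodule ℂ 𝕂, UnifJNeg J W' → W ≤ W' → W' = W

/-- `W` is a maximal `J`-nonnegative subspace. -/
def MaxJNonneg (J : 𝕂 →L[ℂ] 𝕂) (W : Submodule ℂ 𝕂) : Prop :=
  JNonneg J W ∧ ∀ W' : Submodule ℂ 𝕂, JNonneg J W' → W ≤ W' → W' = W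

/-- `W` is a maximal `J`-nonpositive subspace. -/
def MaxJNonpos (J : 𝕂 →L[ℂ] 𝕂) (W : Submodule ℂ 𝕂) : Prop :=
  JNonpos J W ∧ ∀ W' : Submodule ℂ 𝕂, JNonpos J W' → W ≤ W' → W' = W

/-- The `J`-orthogonal companion `M^{[⊥]} = {f | [f, m] = 0 ∀ m ∈ M}`. -/
def JOrth (J : 𝕂 →L[ℂ] 𝕂) (M : Submodule ℂ 𝕂) : Submodule ℂ 𝕂 where
  carrier := {f | ∀ m ∈ M, ip J f m = 0}
  add_mem' := by
    intro a b ha hb m hm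
    simp only [ip, inner_add_right] at *
    rw [ha m hm, hb m hm, add_zero]
  zero_mem' := by
    intro m hm
    simp [ip]
  smul_mem' := by
    intro c a ha m hm
    simp only [ip, inner_smul_right] at *
    rw [ha m hm, mul_zero]

/-- A closed subspace is regular (projectively complete) if `𝕂 = M ⊕ M^{[⊥]}`. -/
def Regular (J : 𝕂 →L[ℂ] 𝕂) (M : Submodule ℂ 𝕂) : Prop :=
  IsClosed (M : Set 𝕂) ∧ IsCompl M (JOrth J M)

/-- The orthogonal projection `π_M` onto `M` as an endomorphism of `𝕂`
(junk value `0` if `M` is not closed). -/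
def pr (M : Submodule ℂ 𝕂) : 𝕂 →L[ℂ] 𝕂 :=
  if h : IsClosed (M : Set 𝕂) then
    letI : CompleteSpace M := h.completeSpace_coe
    M.subtypeL ∘L M.orthogonalProjectionOnto
  else 0

/-- The Gramian operator `G_M = π_M ∘ J|_M : M → M`
(junk value `0` if `M` is not closed). -/
def gram (J : 𝕂 →L[ℂ] 𝕂) (M : Submodule ℂ 𝕂) : M →L[ℂ] M :=
  if h : IsClosed (M : Set 𝕂) then
    letI : CompleteSpace M := h.completeSpace_coe
    M.orthogonalProjectionOnto ∘L (J ∘L M.subtypeL)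
  else 0

/-- The reduced minimum modulus `γ(T) = inf {‖Tx‖ : x ∈ N(T)ᗮ, ‖x‖ = 1}`. -/
def rmm {E F : Type*} [NormedAddCommGroup E] [InnerProductSpace ℂ E]
    [NormedAddCommGroup F] [InnerProductSpace ℂ F] (T : E →L[ℂ] F) : ℝ :=
  sInf ((fun x => ‖T x‖) '' {x | x ∈ (LinearMap.ker (T : E →ₗ[ℂ] F))ᗮ ∧ ‖x‖ = 1})

/-- `M_S`: the closure of `Σ_{i ∈ S} W i`. -/
def Mspace (W : ι → Submodule ℂ 𝕂) (S : Set ι) : Submodule ℂ 𝕂 :=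
  (⨆ i ∈ S, W i).topologicalClosure

/-- The closed span of `{f i : i ∈ S}`. -/
def Mspan (f : ι → 𝕂) (S : Set ι) : Submodule ℂ 𝕂 :=
  (Submodule.span ℂ (f '' S)).topologicalClosure

/-- The subspace of the ℓ²-direct sum consisting of families supported on `S`. -/
def supp (W : ι → Submodule ℂ 𝕂) (S : Set ι) :
    Submodule ℂ (lp (fun i => W i) 2) where
  carrier := {x | ∀ i ∉ S, x i = 0}
  add_mem' := by
    intro a b ha hb i hi
    have h : (a + b : lp (fun i => W i) 2) i = a i + b i := by
      rw [lp.coeFn_add]; rfl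
    rw [h, ha i hi, hb i hi, add_zero]
  zero_mem' := by
    intro i hi
    have h : (0 : lp (fun i => W i) 2) i = 0 := by
      rw [lp.coeFn_zero]; rfl
    rw [h]
  smul_mem' := by
    intro c a ha i hi
    have h : (c • a : lp (fun i => W i) 2) i = c • a i := by
      rw [lp.coeFn_smul]; rfl
    rw [h, ha i hi, smul_zero]

/-- `T` is the synthesis operator of the weighted family of subspaces `(W, v)`:
`T {f_i} = Σ_i v_i f_i` (an unconditionally convergent sum). -/
def IsSynth (W : ι → Submodule ℂ 𝕂) (v : ι → ℝ)
    (T : lp (fun i => W i) 2 →L[ℂ] 𝕂) : Prop :=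
  ∀ x : lp (fun i => W i) 2, HasSum (fun i => (v i : ℂ) • (x i : 𝕂)) (T x)

/-- The range of `T ∘ P_S` where `P_S` is the orthogonal projection onto the
families supported on `S`, i.e. the image under `T` of the families supported on `S`. -/
def rng {W : ι → Submodule ℂ 𝕂} (T : lp (fun i => W i) 2 →L[ℂ] 𝕂)
    (S : Set ι) : Submodule ℂ 𝕂 :=
  (supp W S).map (T : lp (fun i => W i) 2 →ₗ[ℂ] 𝕂)

/-- `(W, v)` (with the partition `Ipos`, `Ineg` of the index set and synthesis
operator `T`) is a `J`-fusion frame for `𝕂`. -/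
structure IsJFusionFrame (J : 𝕂 →L[ℂ] 𝕂) (W : ι → Submodule ℂ 𝕂) (v : ι → ℝ)
    (Ipos Ineg : Set ι) (T : lp (fun i => W i) 2 →L[ℂ] 𝕂) : Prop where
  partition : ∀ i : ι, (i ∈ Ipos ∧ i ∉ Ineg) ∨ (i ∈ Ineg ∧ i ∉ Ipos)
  pos_nonneg : ∀ i ∈ Ipos, JNonneg J (W i)
  neg_neg : ∀ i ∈ Ineg, JNeg J (W i)
  weights : ∀ i, 0 < v i
  synth : IsSynth W v T
  max_pos : MaxUnifJPos J (rng T Ipos)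
  max_neg : MaxUnifJNeg J (rng T Ineg)

/-- `Bm ≤ Am < 0 < Ap ≤ Bp` are `J`-fusion frame bounds for `(W, v)`:
`A_± [f,f] ≤ Σ_{i ∈ I_±} v_i² |[π_{W_i} J f, f]| ≤ B_± [f,f]` for `f ∈ M_±`. -/
def JFusionBounds (J : 𝕂 →L[ℂ] 𝕂) (W : ι → Submodule ℂ 𝕂) (v : ι → ℝ)
    (Ipos Ineg : Set ι) (Bm Am Ap Bp : ℝ) : Prop :=
  Bm ≤ Am ∧ Am < 0 ∧ 0 < Ap ∧ Ap ≤ Bp ∧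
  (∀ f ∈ Mspace W Ipos,
    Summable (fun i : Ipos => v (i : ι) ^ 2 * ‖ip J (pr (W (i : ι)) (J f)) f‖) ∧
    Ap * (ip J f f).re ≤ ∑' i : Ipos, v (i : ι) ^ 2 * ‖ip J (pr (W (i : ι)) (J f)) f‖ ∧
    ∑' i : Ipos, v (i : ι) ^ 2 * ‖ip J (pr (W (i : ι)) (J f)) f‖ ≤ Bp * (ip J f f).re) ∧
  (∀ f ∈ Mspace W Ineg,
    Summable (fun i : Ineg => v (i : ι) ^ 2 * ‖ip J (pr (W (i : ι)) (J f)) f‖) ∧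
    Am * (ip J f f).re ≤ ∑' i : Ineg, v (i : ι) ^ 2 * ‖ip J (pr (W (i : ι)) (J f)) f‖ ∧
    ∑' i : Ineg, v (i : ι) ^ 2 * ‖ip J (pr (W (i : ι)) (J f)) f‖ ≤ Bm * (ip J f f).re)

/-- `(Bm, Am, Ap, Bp)` are the *optimal* `J`-fusion frame bounds. -/
def OptJFusionBounds (J : 𝕂 →L[ℂ] 𝕂) (W : ι → Submodule ℂ 𝕂) (v : ι → ℝ)
    (Ipos Ineg : Set ι) (Bm Am Ap Bp : ℝ) : Prop :=
  JFusionBounds J W v Ipos Ineg Bm Am Ap Bp ∧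
  ∀ Bm' Am' Ap' Bp' : ℝ, JFusionBounds J W v Ipos Ineg Bm' Am' Ap' Bp' →
    Bm' ≤ Bm ∧ Am ≤ Am' ∧ Ap' ≤ Ap ∧ Bp ≤ Bp'

/-- `{f i}` (with the partition `Ipos`, `Ineg` of the index set) is a `J`-frame for `𝕂`. -/
structure IsJFrame (J : 𝕂 →L[ℂ] 𝕂) (f : ι → 𝕂) (Ipos Ineg : Set ι) : Prop where
  partition : ∀ i : ι, (i ∈ Ipos ∧ i ∉ Ineg) ∨ (i ∈ Ineg ∧ i ∉ Ipos)
  nonneg : ∀ i ∈ Ipos, 0 ≤ (ip J (f i) (f i)).re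
  neg : ∀ i ∈ Ineg, (ip J (f i) (f i)).re < 0
  frame : ∃ C D : ℝ, 0 < C ∧ C ≤ D ∧ ∀ g : 𝕂,
    Summable (fun i => ‖@inner ℂ _ _ g (f i)‖ ^ 2) ∧
    C * ‖g‖ ^ 2 ≤ ∑' i, ‖@inner ℂ _ _ g (f i)‖ ^ 2 ∧
    ∑' i, ‖@inner ℂ _ _ g (f i)‖ ^ 2 ≤ D * ‖g‖ ^ 2
  max_pos : MaxUnifJPos J (Mspan f Ipos)
  max_neg : MaxUnifJNeg J (Mspan f Ineg)

/-- `Bm ≤ Am < 0 < Ap ≤ Bp` are `J`-frame bounds for `{f i}`: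
`A_± [g,g] ≤ Σ_{i ∈ I_±} |[g, f i]|² ≤ B_± [g,g]` for `g ∈ M_±`. -/
def JFrameBounds (J : 𝕂 →L[ℂ] 𝕂) (f : ι → 𝕂) (Ipos Ineg : Set ι)
    (Bm Am Ap Bp : ℝ) : Prop :=
  Bm ≤ Am ∧ Am < 0 ∧ 0 < Ap ∧ Ap ≤ Bp ∧
  (∀ g ∈ Mspan f Ipos,
    Summable (fun i : Ipos => ‖ip J g (f (i : ι))‖ ^ 2) ∧
    Ap * (ip J g g).re ≤ ∑' i : Ipos, ‖ip J g (f (i : ι))‖ ^ 2 ∧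
    ∑' i : Ipos, ‖ip J g (f (i : ι))‖ ^ 2 ≤ Bp * (ip J g g).re) ∧
  (∀ g ∈ Mspan f Ineg,
    Summable (fun i : Ineg => ‖ip J g (f (i : ι))‖ ^ 2) ∧
    Am * (ip J g g).re ≤ ∑' i : Ineg, ‖ip J g (f (i : ι))‖ ^ 2 ∧
    ∑' i : Ineg, ‖ip J g (f (i : ι))‖ ^ 2 ≤ Bm * (ip J g g).re)

/-- `(Bm, Am, Ap, Bp)` are the *optimal* `J`-frame bounds. -/
def OptJFrameBounds (J : 𝕂 →L[ℂ] 𝕂) (f : ι → 𝕂) (Ipos Ineg : Set ι)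
    (Bm Am Ap Bp : ℝ) : Prop :=
  JFrameBounds J f Ipos Ineg Bm Am Ap Bp ∧
  ∀ Bm' Am' Ap' Bp' : ℝ, JFrameBounds J f Ipos Ineg Bm' Am' Ap' Bp' →
    Bm' ≤ Bm ∧ Am ≤ Am' ∧ Ap' ≤ Ap ∧ Bp ≤ Bp'


section helpers

variable {𝕂 : Type*} [NormedAddCommGroup 𝕂] [InnerProductSpace ℂ 𝕂] [CompleteSpace 𝕂]
variable {ι : Type*}

lemma mem_supp {W : ι → Submodule ℂ 𝕂} {S : Set ι} {x : lp (fun i => W i) 2} :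
    x ∈ supp W S ↔ ∀ i ∉ S, x i = 0 := Iff.rfl

lemma JJ_apply {J : 𝕂 →L[ℂ] 𝕂} (hJ : IsFundSym J) (x : 𝕂) : J (J x) = x := by
  have := congrArg (fun A : 𝕂 →L[ℂ] 𝕂 => A x) hJ.2
  simpa using this

lemma norm_J_apply {J : 𝕂 →L[ℂ] 𝕂} (hJ : IsFundSym J) (x : 𝕂) : ‖J x‖ = ‖x‖ := by
  have h : (inner ℂ (J x) (J x) : ℂ) = inner ℂ x x := by
    have hsym := hJ.1.isSymmetric x (J x)
    simp only [ContinuousLinearMap.coe_coe] at hsym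
    rw [JJ_apply hJ] at hsym
    exact hsym
  rw [norm_eq_sqrt_re_inner (𝕜 := ℂ) (J x), norm_eq_sqrt_re_inner (𝕜 := ℂ) x, h]

lemma pr_spec {M : Submodule ℂ 𝕂} (hM : IsClosed (M : Set 𝕂)) (x : 𝕂) :
    pr M x ∈ M ∧ ∀ w ∈ M, (inner ℂ (x - pr M x) w : ℂ) = 0 := by
  letI : CompleteSpace M := hM.completeSpace_coe
  simp only [pr, dif_pos hM, ContinuousLinearMap.comp_apply, Submodule.subtypeL_apply]
  exact ⟨(M.orthogonalProjectionOnto x).2, fun w hw => M.starProjection_inner_eq_zero x w hw⟩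

lemma pr_mem {M : Submodule ℂ 𝕂} (hM : IsClosed (M : Set 𝕂)) (x : 𝕂) : pr M x ∈ M :=
  (pr_spec hM x).1

lemma inner_pr {M : Submodule ℂ 𝕂} (hM : IsClosed (M : Set 𝕂)) (x : 𝕂) {w : 𝕂} (hw : w ∈ M) :
    (inner ℂ x w : ℂ) = inner ℂ (pr M x) w := by
  have := (pr_spec hM x).2 w hw
  rw [inner_sub_left, sub_eq_zero] at this
  exact this

lemma inner_pr_self {M : Submodule ℂ 𝕂} (hM : IsClosed (M : Set 𝕂)) (x : 𝕂) :
    (inner ℂ x (pr M x) : ℂ) = (‖pr M x‖ : ℂ) ^ 2 := by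
  rw [inner_pr hM x (pr_mem hM x), inner_self_eq_norm_sq_to_K]
  norm_cast

lemma ip_pr_norm {J : 𝕂 →L[ℂ] 𝕂} {M : Submodule ℂ 𝕂} (hM : IsClosed (M : Set 𝕂)) (f : 𝕂) :
    ‖ip J (pr M (J f)) f‖ = ‖pr M (J f)‖ ^ 2 := by
  have h : ip J (pr M (J f)) f = (‖pr M (J f)‖ : ℂ) ^ 2 := inner_pr_self hM (J f)
  rw [h, norm_pow, Complex.norm_real, Real.norm_eq_abs, abs_of_nonneg (norm_nonneg _)]

lemma eval_continuous (W : ι → Submodule ℂ 𝕂) (i : ι) :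
    Continuous (fun x : lp (fun j => W j) 2 => x i) := by
  refine (LipschitzWith.of_dist_le_mul (K := 1) fun x y => ?_).continuous
  rw [dist_eq_norm, dist_eq_norm, NNReal.coe_one, one_mul]
  calc ‖x i - y i‖ = ‖(x - y) i‖ := by rw [lp.coeFn_sub]; rfl
    _ ≤ ‖x - y‖ := lp.norm_apply_le_norm (by norm_num) _ i

lemma supp_isClosed (W : ι → Submodule ℂ 𝕂) (S : Set ι) :
    IsClosed ((supp W S : Set (lp (fun i => W i) 2))) := by
  have h : (supp W S : Set (lp (fun i => W i) 2)) =
      ⋂ (i : ι), ⋂ (_ : i ∉ S), {x : lp (fun i => W i) 2 | x i = 0} := by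
    ext x
    simp only [Set.mem_iInter, Set.mem_setOf_eq, SetLike.mem_coe, mem_supp]
  rw [h]
  exact isClosed_iInter fun i => isClosed_iInter fun _ =>
    isClosed_eq (eval_continuous W i) continuous_const

lemma T_single {W : ι → Submodule ℂ 𝕂} {v : ι → ℝ} {T : lp (fun i => W i) 2 →L[ℂ] 𝕂}
    (hT : IsSynth W v T) (i : ι) (w : W i) :
    T (lp.single 2 i w) = (v i : ℂ) • (w : 𝕂) := by
  classical
  refine (hT (lp.single 2 i w)).unique ?_
  have h : (fun j => (v j : ℂ) • ((lp.single 2 i w : lp (fun k => W k) 2) j : 𝕂)) =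
      fun j => if j = i then (v i : ℂ) • (w : 𝕂) else 0 := by
    funext j
    rcases eq_or_ne j i with rfl | h
    · rw [lp.single_apply_self, if_pos rfl]
    · rw [lp.single_apply_ne 2 i _ h, if_neg h]
      simp
  rw [h]
  exact hasSum_ite_eq i _

lemma single_mem_supp {W : ι → Submodule ℂ 𝕂} {S : Set ι} {i : ι} (hi : i ∈ S) (w : W i) :
    lp.single 2 i w ∈ supp W S := by
  intro j hj
  exact lp.single_apply_ne 2 i _ (fun h => hj (h ▸ hi))

lemma W_le_rng {W : ι → Submodule ℂ 𝕂} {v : ι → ℝ} {T : lp (fun i => W i) 2 →L[ℂ] 𝕂}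
    (hT : IsSynth W v T) (hv : ∀ i, 0 < v i) {S : Set ι} {i : ι} (hi : i ∈ S) :
    W i ≤ rng T S := by
  intro w hw
  have hvi : (v i : ℂ) ≠ 0 := Complex.ofReal_ne_zero.2 (hv i).ne'
  refine Submodule.mem_map.2 ⟨lp.single 2 i ((v i : ℂ)⁻¹ • ⟨w, hw⟩), single_mem_supp hi _, ?_⟩
  rw [ContinuousLinearMap.coe_coe, T_single hT]
  push_cast
  rw [smul_smul, mul_inv_cancel₀ hvi, one_smul]

lemma Mspace_le_rng {W : ι → Submodule ℂ 𝕂} {v : ι → ℝ} {T : lp (fun i => W i) 2 →L[ℂ] 𝕂}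
    (hT : IsSynth W v T) (hv : ∀ i, 0 < v i) {S : Set ι}
    (hcl : IsClosed ((rng T S : Set 𝕂))) : Mspace W S ≤ rng T S := by
  show (⨆ i ∈ S, W i).topologicalClosure ≤ rng T S
  have hle : (⨆ i ∈ S, W i) ≤ rng T S := iSup₂_le fun i hi => W_le_rng hT hv hi
  exact (⨆ i ∈ S, W i).topologicalClosure_minimal hle hcl

lemma closed_of_maxUnifJPos {J : 𝕂 →L[ℂ] 𝕂} {N : Submodule ℂ 𝕂} (h : MaxUnifJPos J N) :
    IsClosed (N : Set 𝕂) := by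
  obtain ⟨⟨α, hα, hαN⟩, hmax⟩ := h
  have hset : IsClosed {f : 𝕂 | α * ‖f‖ ^ 2 ≤ (ip J f f).re} := by
    apply isClosed_le
    · exact continuous_const.mul (continuous_norm.pow 2)
    · exact Complex.continuous_re.comp ((J.continuous).inner continuous_id)
  have hsub : (N.topologicalClosure : Set 𝕂) ⊆ {f : 𝕂 | α * ‖f‖ ^ 2 ≤ (ip J f f).re} := by
    rw [Submodule.topologicalClosure_coe]
    exact closure_minimal hαN hset
  have heq : N.topologicalClosure = N :=
    hmax _ ⟨α, hα, fun f hf => hsub hf⟩ N.le_topologicalClosure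
  rw [← heq]
  exact N.isClosed_topologicalClosure

lemma closed_of_maxUnifJNeg {J : 𝕂 →L[ℂ] 𝕂} {N : Submodule ℂ 𝕂} (h : MaxUnifJNeg J N) :
    IsClosed (N : Set 𝕂) := by
  obtain ⟨⟨α, hα, hαN⟩, hmax⟩ := h
  have hset : IsClosed {f : 𝕂 | (ip J f f).re ≤ -(α * ‖f‖ ^ 2)} := by
    apply isClosed_le
    · exact Complex.continuous_re.comp ((J.continuous).inner continuous_id)
    · exact (continuous_const.mul (continuous_norm.pow 2)).neg
  have hsub : (N.topologicalClosure : Set 𝕂) ⊆ {f : 𝕂 | (ip J f f).re ≤ -(α * ‖f‖ ^ 2)} := by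
    rw [Submodule.topologicalClosure_coe]
    exact closure_minimal hαN hset
  have heq : N.topologicalClosure = N :=
    hmax _ ⟨α, hα, fun f hf => hsub hf⟩ N.le_topologicalClosure
  rw [← heq]
  exact N.isClosed_topologicalClosure

end helpers

section ana

variable {𝕂 : Type*} [NormedAddCommGroup 𝕂] [InnerProductSpace ℂ 𝕂] [CompleteSpace 𝕂]
variable {ι : Type*}

/-- The truncated "analysis family" of `g` (squared weighted projection norms). -/
def anaF (W : ι → Submodule ℂ 𝕂) (v : ι → ℝ) (S : Set ι) (g : 𝕂) (i : ι) : ℝ :=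
  if i ∈ S then v i ^ 2 * ‖pr (W i) g‖ ^ 2 else 0

/-- The truncated "analysis family" of `g` as a family of vectors. -/
def ana (W : ι → Submodule ℂ 𝕂) (hWc : ∀ i, IsClosed ((W i : Set 𝕂))) (v : ι → ℝ)
    (S : Set ι) (g : 𝕂) (i : ι) : W i :=
  if i ∈ S then (v i : ℂ) • ⟨pr (W i) g, pr_mem (hWc i) g⟩ else 0

lemma anaF_nonneg {W : ι → Submodule ℂ 𝕂} {v : ι → ℝ} {S : Set ι} {g : 𝕂} (i : ι) :
    0 ≤ anaF W v S g i := by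
  unfold anaF
  split_ifs
  · positivity
  · exact le_refl 0

lemma norm_ana_sq {W : ι → Submodule ℂ 𝕂} (hWc : ∀ i, IsClosed ((W i : Set 𝕂)))
    {v : ι → ℝ} {S : Set ι} {g : 𝕂} (i : ι) :
    ‖ana W hWc v S g i‖ ^ 2 = anaF W v S g i := by
  unfold ana anaF
  split_ifs with h
  · rw [norm_smul, Complex.norm_real, Real.norm_eq_abs, mul_pow, sq_abs]
    rfl
  · simp

lemma coe_ana {W : ι → Submodule ℂ 𝕂} (hWc : ∀ i, IsClosed ((W i : Set 𝕂)))
    {v : ι → ℝ} {S : Set ι} {g : 𝕂} {i : ι} (hi : i ∈ S) :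
    (ana W hWc v S g i : 𝕂) = (v i : ℂ) • pr (W i) g := by
  unfold ana
  rw [if_pos hi]
  rfl

lemma ana_ne {W : ι → Submodule ℂ 𝕂} (hWc : ∀ i, IsClosed ((W i : Set 𝕂)))
    {v : ι → ℝ} {S : Set ι} {g : 𝕂} {i : ι} (hi : i ∉ S) :
    ana W hWc v S g i = 0 := by
  unfold ana
  rw [if_neg hi]

lemma re_inner_term {W : ι → Submodule ℂ 𝕂} (hWc : ∀ i, IsClosed ((W i : Set 𝕂)))
    {v : ι → ℝ} {S : Set ι} {g : 𝕂} (i : ι) :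
    ((inner ℂ g ((v i : ℂ) • ((ana W hWc v S g i : 𝕂))) : ℂ)).re = anaF W v S g i := by
  by_cases hi : i ∈ S
  · rw [coe_ana hWc hi, inner_smul_right, inner_smul_right, inner_pr_self (hWc i)]
    have h : ((v i : ℂ) * ((v i : ℂ) * ((‖pr (W i) g‖ : ℝ) : ℂ) ^ 2)) =
        (((v i * (v i * ‖pr (W i) g‖ ^ 2)) : ℝ) : ℂ) := by push_cast; ring
    rw [h, Complex.ofReal_re]
    unfold anaF
    rw [if_pos hi]
    ring
  · rw [ana_ne hWc hi]
    unfold anaF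
    rw [if_neg hi]
    simp

lemma sum_anaF_le {W : ι → Submodule ℂ 𝕂} (hWc : ∀ i, IsClosed ((W i : Set 𝕂)))
    {v : ι → ℝ} {T : lp (fun i => W i) 2 →L[ℂ] 𝕂} (hT : IsSynth W v T)
    {S : Set ι} (g : 𝕂) (s : Finset ι) :
    ∑ i ∈ s, anaF W v S g i ≤ ‖T‖ ^ 2 * ‖g‖ ^ 2 := by
  classical
  set a := ana W hWc v S g with ha
  set x : lp (fun i => W i) 2 := ∑ i ∈ s, lp.single 2 i (a i) with hx
  set Q := ∑ i ∈ s, anaF W v S g i with hQ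
  have hQ0 : 0 ≤ Q := Finset.sum_nonneg fun i _ => anaF_nonneg i
  have hx2 : ‖x‖ ^ 2 = Q := by
    have h2 := lp.norm_sum_single (p := 2) (E := fun i => W i) (by norm_num) a s
    have h3 : (2 : ℝ≥0∞).toReal = (2 : ℝ) := by norm_num
    rw [h3] at h2
    simp only [Real.rpow_two] at h2
    rw [hx, hQ, h2]
    exact Finset.sum_congr rfl fun i _ => norm_ana_sq hWc i
  have hTx : T x = ∑ i ∈ s, (v i : ℂ) • ((a i : 𝕂)) := by
    rw [hx, map_sum]
    exact Finset.sum_congr rfl fun i _ => T_single hT i (a i)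
  have hinner : ((inner ℂ g (T x) : ℂ)).re = Q := by
    rw [hTx, inner_sum, Complex.re_sum]
    exact Finset.sum_congr rfl fun i _ => re_inner_term hWc i
  have hre : Q ≤ ‖T‖ * ‖g‖ * ‖x‖ := by
    calc Q = ((inner ℂ g (T x) : ℂ)).re := hinner.symm
      _ ≤ ‖(inner ℂ g (T x) : ℂ)‖ := by
          exact Complex.re_le_norm _
      _ ≤ ‖g‖ * ‖T x‖ := norm_inner_le_norm _ _
      _ ≤ ‖g‖ * (‖T‖ * ‖x‖) := mul_le_mul_of_nonneg_left (T.le_opNorm x) (norm_nonneg g)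
      _ = ‖T‖ * ‖g‖ * ‖x‖ := by ring
  rcases eq_or_lt_of_le hQ0 with h0 | h0
  · rw [← h0]; positivity
  · have hxpos : 0 < ‖x‖ := by nlinarith [hx2, norm_nonneg x]
    have hc : 0 ≤ ‖T‖ * ‖g‖ := mul_nonneg T.opNorm_nonneg (norm_nonneg g)
    have hxle : ‖x‖ ≤ ‖T‖ * ‖g‖ := by nlinarith [hx2, hre, hxpos]
    nlinarith [hx2, hxle, hc, norm_nonneg x]

end ana

section ana2

variable {𝕂 : Type*} [NormedAddCommGroup 𝕂] [InnerProductSpace ℂ 𝕂] [CompleteSpace 𝕂]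
variable {ι : Type*}

lemma ana_memℓp {W : ι → Submodule ℂ 𝕂} (hWc : ∀ i, IsClosed ((W i : Set 𝕂)))
    {v : ι → ℝ} {T : lp (fun i => W i) 2 →L[ℂ] 𝕂} (hT : IsSynth W v T)
    {S : Set ι} (g : 𝕂) : Memℓp (ana W hWc v S g) 2 := by
  refine memℓp_gen' (C := ‖T‖ ^ 2 * ‖g‖ ^ 2) fun s => ?_
  have h3 : (2 : ℝ≥0∞).toReal = (2 : ℝ) := by norm_num
  calc ∑ i ∈ s, ‖ana W hWc v S g i‖ ^ (2 : ℝ≥0∞).toReal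
      = ∑ i ∈ s, anaF W v S g i := by
        refine Finset.sum_congr rfl fun i _ => ?_
        rw [h3, Real.rpow_two, norm_ana_sq hWc i]
    _ ≤ ‖T‖ ^ 2 * ‖g‖ ^ 2 := sum_anaF_le hWc hT g s

lemma summable_anaF {W : ι → Submodule ℂ 𝕂} (hWc : ∀ i, IsClosed ((W i : Set 𝕂)))
    {v : ι → ℝ} {T : lp (fun i => W i) 2 →L[ℂ] 𝕂} (hT : IsSynth W v T)
    {S : Set ι} (g : 𝕂) : Summable (anaF W v S g) := by
  have h := (ana_memℓp hWc hT (S := S) g).summable (by norm_num : 0 < (2 : ℝ≥0∞).toReal)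
  refine h.congr fun i => ?_
  have h3 : (2 : ℝ≥0∞).toReal = (2 : ℝ) := by norm_num
  rw [h3, Real.rpow_two, norm_ana_sq hWc i]

lemma tsum_anaF_le {W : ι → Submodule ℂ 𝕂} (hWc : ∀ i, IsClosed ((W i : Set 𝕂)))
    {v : ι → ℝ} {T : lp (fun i => W i) 2 →L[ℂ] 𝕂} (hT : IsSynth W v T)
    {S : Set ι} (g : 𝕂) : ∑' i, anaF W v S g i ≤ ‖T‖ ^ 2 * ‖g‖ ^ 2 :=
  Summable.tsum_le_of_sum_le (summable_anaF hWc hT g) (sum_anaF_le hWc hT g)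

lemma abs_inner_g_Tx_le {W : ι → Submodule ℂ 𝕂} (hWc : ∀ i, IsClosed ((W i : Set 𝕂)))
    {v : ι → ℝ} {T : lp (fun i => W i) 2 →L[ℂ] 𝕂} (hT : IsSynth W v T)
    {S : Set ι} (g : 𝕂) (x : lp (fun i => W i) 2) (hx : x ∈ supp W S) :
    ‖(inner ℂ g (T x) : ℂ)‖ ≤ Real.sqrt (∑' i, anaF W v S g i) * ‖x‖ := by
  set A : lp (fun i => W i) 2 := ⟨ana W hWc v S g, ana_memℓp hWc hT g⟩ with hA
  have hAi : ∀ i, A i = ana W hWc v S g i := fun i => rfl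
  have hinner : (inner ℂ A x : ℂ) = inner ℂ g (T x) := by
    have h1 := lp.hasSum_inner (𝕜 := ℂ) A x
    have h3 := (hT x).mapL (innerSL ℂ g)
    have hfe : (fun i => ((innerSL ℂ g) ((v i : ℂ) • (x i : 𝕂)) : ℂ)) =
        fun i => (inner ℂ (A i) (x i) : ℂ) := by
      funext i
      rw [innerSL_apply_apply, inner_smul_right, hAi i, Submodule.coe_inner]
      by_cases hi : i ∈ S
      · rw [coe_ana hWc hi, inner_smul_left, Complex.conj_ofReal,
          ← inner_pr (hWc i) g (x i).2]
      · rw [ana_ne hWc hi, hx i hi]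
        simp
    rw [hfe] at h3
    have h4 := h1.unique h3
    rwa [innerSL_apply_apply] at h4
  have hnA : ‖A‖ = Real.sqrt (∑' i, anaF W v S g i) := by
    have h2 := lp.norm_rpow_eq_tsum (p := 2) (by norm_num) A
    have h3 : (2 : ℝ≥0∞).toReal = (2 : ℝ) := by norm_num
    rw [h3] at h2
    simp only [Real.rpow_two] at h2
    have h4 : ‖A‖ ^ 2 = ∑' i, anaF W v S g i := by
      rw [h2]
      exact tsum_congr fun i => norm_ana_sq hWc i
    rw [← h4, Real.sqrt_sq (norm_nonneg _)]
  calc ‖(inner ℂ g (T x) : ℂ)‖ = ‖(inner ℂ A x : ℂ)‖ := by rw [hinner]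
    _ ≤ ‖A‖ * ‖x‖ := norm_inner_le_norm _ _
    _ = Real.sqrt (∑' i, anaF W v S g i) * ‖x‖ := by rw [hnA]

lemma core {J : 𝕂 →L[ℂ] 𝕂} {W : ι → Submodule ℂ 𝕂} {v : ι → ℝ}
    {T : lp (fun i => W i) 2 →L[ℂ] 𝕂} (hJ : IsFundSym J)
    (hWc : ∀ i, IsClosed ((W i : Set 𝕂))) (hT : IsSynth W v T) (hv : ∀ i, 0 < v i)
    {S : Set ι} (hcl : IsClosed ((rng T S : Set 𝕂))) :
    ∃ C : ℝ, 0 < C ∧ ∀ f ∈ Mspace W S,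
      f ∈ rng T S ∧
      Summable (fun i : S => v (i : ι) ^ 2 * ‖ip J (pr (W (i : ι)) (J f)) f‖) ∧
      0 ≤ ∑' i : S, v (i : ι) ^ 2 * ‖ip J (pr (W (i : ι)) (J f)) f‖ ∧
      |(ip J f f).re| ≤
        C * Real.sqrt (∑' i : S, v (i : ι) ^ 2 * ‖ip J (pr (W (i : ι)) (J f)) f‖) * ‖f‖ ∧
      (∑' i : S, v (i : ι) ^ 2 * ‖ip J (pr (W (i : ι)) (J f)) f‖) ≤ ‖T‖ ^ 2 * ‖f‖ ^ 2 := by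
  classical
  haveI : ∀ i, CompleteSpace (W i) := fun i => (hWc i).completeSpace_coe
  haveI : CompleteSpace (supp W S) := (supp_isClosed W S).completeSpace_coe
  haveI : CompleteSpace (rng T S) := hcl.completeSpace_coe
  set Tp : supp W S →L[ℂ] rng T S :=
    ContinuousLinearMap.codRestrict (T.comp (supp W S).subtypeL) (rng T S)
      (fun x => Submodule.mem_map.2 ⟨x.1, x.2, rfl⟩) with hTp
  have hsurj : Function.Surjective Tp := by
    rintro ⟨y, hy⟩
    obtain ⟨x, hx, hxy⟩ := Submodule.mem_map.1 hy
    exact ⟨⟨x, hx⟩, Subtype.ext hxy⟩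
  obtain ⟨C₀, hC₀, hpre⟩ := Tp.exists_preimage_norm_le hsurj
  refine ⟨C₀, hC₀, fun f hf => ?_⟩
  have hfr : f ∈ rng T S := Mspace_le_rng hT hv hcl hf
  set g := J f with hg
  have hkey : ∀ i : S, v (i : ι) ^ 2 * ‖ip J (pr (W (i : ι)) (J f)) f‖ = anaF W v S g (i : ι) := by
    rintro ⟨i, hi⟩
    rw [ip_pr_norm (hWc i) f]
    unfold anaF
    rw [if_pos hi]
  have hsumS : Summable (fun i : S => v (i : ι) ^ 2 * ‖ip J (pr (W (i : ι)) (J f)) f‖) := by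
    refine ((summable_anaF hWc hT g).subtype S).congr fun i => (hkey i).symm
  have htsum : (∑' i : S, v (i : ι) ^ 2 * ‖ip J (pr (W (i : ι)) (J f)) f‖) =
      ∑' i, anaF W v S g i := by
    rw [tsum_congr hkey, tsum_subtype]
    refine tsum_congr fun i => ?_
    rw [Set.indicator_apply]
    by_cases hi : i ∈ S
    · rw [if_pos hi]
    · rw [if_neg hi]
      unfold anaF
      rw [if_neg hi]
  have hts0 : 0 ≤ ∑' i, anaF W v S g i := tsum_nonneg fun i => anaF_nonneg i
  refine ⟨hfr, hsumS, by rw [htsum]; exact hts0, ?_, ?_⟩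
  · obtain ⟨x, hTx, hxn⟩ := hpre ⟨f, hfr⟩
    have hTx1 : T x.1 = f := congrArg Subtype.val hTx
    have hxn1 : ‖x.1‖ ≤ C₀ * ‖f‖ := hxn
    have h1 : |(ip J f f).re| ≤ ‖(inner ℂ g (T x.1) : ℂ)‖ := by
      rw [hTx1]
      exact Complex.abs_re_le_norm _
    have h2 := abs_inner_g_Tx_le hWc hT g x.1 x.2
    have h3 : Real.sqrt (∑' i, anaF W v S g i) * ‖x.1‖ ≤
        Real.sqrt (∑' i, anaF W v S g i) * (C₀ * ‖f‖) :=
      mul_le_mul_of_nonneg_left hxn1 (Real.sqrt_nonneg _)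
    rw [htsum]
    calc |(ip J f f).re| ≤ Real.sqrt (∑' i, anaF W v S g i) * (C₀ * ‖f‖) :=
          le_trans h1 (le_trans h2 h3)
      _ = C₀ * Real.sqrt (∑' i, anaF W v S g i) * ‖f‖ := by ring
  · rw [htsum]
    calc (∑' i, anaF W v S g i) ≤ ‖T‖ ^ 2 * ‖g‖ ^ 2 := tsum_anaF_le hWc hT g
      _ = ‖T‖ ^ 2 * ‖f‖ ^ 2 := by rw [hg, norm_J_apply hJ]

end ana2

section quant

lemma quantLow {α C u Sf nf : ℝ} (hα : 0 < α) (hC : 0 < C) (hu : 0 ≤ u) (hSf : 0 ≤ Sf)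
    (hnf : 0 ≤ nf) (h1 : u ≤ C * Real.sqrt Sf * nf) (h2 : α * nf ^ 2 ≤ u) :
    α / C ^ 2 * u ≤ Sf := by
  rcases eq_or_lt_of_le hu with h0 | h0
  · rw [← h0, mul_zero]
    exact hSf
  · have hs : Real.sqrt Sf ^ 2 = Sf := Real.sq_sqrt hSf
    have hs0 : 0 ≤ Real.sqrt Sf := Real.sqrt_nonneg Sf
    have hR : 0 ≤ C * Real.sqrt Sf * nf := by positivity
    have hmul := mul_le_mul h1 h1 hu hR
    have hsq : u ^ 2 ≤ C ^ 2 * Sf * nf ^ 2 := by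
      calc u ^ 2 = u * u := pow_two u
        _ ≤ C * Real.sqrt Sf * nf * (C * Real.sqrt Sf * nf) := hmul
        _ = C ^ 2 * Real.sqrt Sf ^ 2 * nf ^ 2 := by ring
        _ = C ^ 2 * Sf * nf ^ 2 := by rw [hs]
    rw [div_mul_eq_mul_div, div_le_iff₀ (by positivity)]
    nlinarith [mul_le_mul_of_nonneg_left h2 (mul_nonneg (sq_nonneg C) hSf), hsq, h0]

lemma quantUp {α T2 u nf Sf : ℝ} (hα : 0 < α) (hT2 : 0 ≤ T2)
    (hup : Sf ≤ T2 * nf ^ 2) (h2 : α * nf ^ 2 ≤ u) : Sf ≤ T2 / α * u := by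
  have h3 : nf ^ 2 ≤ u / α := (le_div_iff₀ hα).2 (by linarith)
  calc Sf ≤ T2 * nf ^ 2 := hup
    _ ≤ T2 * (u / α) := mul_le_mul_of_nonneg_left h3 hT2
    _ = T2 / α * u := by ring

end quant

/-- Every `J`-fusion frame `{(W i, v i)}` for `𝕂` admits `J`-fusion frame
bounds `-∞ < B₋ ≤ A₋ < 0 < A₊ ≤ B₊ < ∞`, i.e. `{(W i, v i) : i ∈ I_±}` is a fusion frame
for `(M_±, ±[·,·])`:
`A_± [f,f] ≤ Σ_{i∈I_±} v_i² |[π_{W_i}(Jf), f]| ≤ B_± [f,f]` for every `f ∈ M_±`. -/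
theorem stmt6 {𝕂 : Type*} [NormedAddCommGroup 𝕂] [InnerProductSpace ℂ 𝕂] [CompleteSpace 𝕂]
    {ι : Type*} (J : 𝕂 →L[ℂ] 𝕂) (hJ : IsFundSym J)
    (W : ι → Submodule ℂ 𝕂) (hWc : ∀ i, IsClosed ((W i : Set 𝕂)))
    (v : ι → ℝ) (Ipos Ineg : Set ι)
    (T : lp (fun i => W i) 2 →L[ℂ] 𝕂)
    (hF : IsJFusionFrame J W v Ipos Ineg T) :
    ∃ Bm Am Ap Bp : ℝ, JFusionBounds J W v Ipos Ineg Bm Am Ap Bp := by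
  obtain ⟨αp, hαp, hposp⟩ := hF.max_pos.1
  obtain ⟨αm, hαm, hposm⟩ := hF.max_neg.1
  have hclp := closed_of_maxUnifJPos hF.max_pos
  have hclm := closed_of_maxUnifJNeg hF.max_neg
  obtain ⟨Cp, hCp, hcorep⟩ := core hJ hWc hF.synth hF.weights hclp
  obtain ⟨Cm, hCm, hcorem⟩ := core hJ hWc hF.synth hF.weights hclm
  set Ap := αp / Cp ^ 2 with hApdef
  have hAp0 : 0 < Ap := by positivity
  set Bp := max (‖T‖ ^ 2 / αp) Ap with hBpdef
  set Am := -(αm / Cm ^ 2) with hAmdef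
  have hAm0 : Am < 0 := by
    rw [hAmdef, neg_lt_zero]
    positivity
  set Bm := min (-(‖T‖ ^ 2 / αm)) Am with hBmdef
  refine ⟨Bm, Am, Ap, Bp, min_le_right _ _, hAm0, hAp0, le_max_right _ _, ?_, ?_⟩
  · intro f hf
    obtain ⟨hfr, hsum, hts0, hlow, hup⟩ := hcorep f hf
    have hα := hposp f hfr
    have ht0 : 0 ≤ (ip J f f).re := le_trans (by positivity) hα
    rw [abs_of_nonneg ht0] at hlow
    refine ⟨hsum, ?_, ?_⟩
    · exact quantLow hαp hCp ht0 hts0 (norm_nonneg f) hlow hα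
    · have h1 : (∑' i : Ipos, v (i : ι) ^ 2 * ‖ip J (pr (W (i : ι)) (J f)) f‖) ≤
          ‖T‖ ^ 2 / αp * (ip J f f).re := quantUp hαp (by positivity) hup hα
      have h2 : ‖T‖ ^ 2 / αp * (ip J f f).re ≤ Bp * (ip J f f).re :=
        mul_le_mul_of_nonneg_right (le_max_left _ _) ht0
      exact h1.trans h2
  · intro f hf
    obtain ⟨hfr, hsum, hts0, hlow, hup⟩ := hcorem f hf
    have hα' := hposm f hfr
    have ht0 : (ip J f f).re ≤ 0 := le_trans hα' (neg_nonpos.2 (by positivity))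
    have hα : αm * ‖f‖ ^ 2 ≤ -(ip J f f).re := by linarith
    rw [abs_of_nonpos ht0] at hlow
    refine ⟨hsum, ?_, ?_⟩
    · have h := quantLow hαm hCm (neg_nonneg.2 ht0) hts0 (norm_nonneg f) hlow hα
      have heq : Am * (ip J f f).re = αm / Cm ^ 2 * (-(ip J f f).re) := by
        rw [hAmdef]; ring
      exact heq.trans_le h
    · have h1 : (∑' i : Ineg, v (i : ι) ^ 2 * ‖ip J (pr (W (i : ι)) (J f)) f‖) ≤
          ‖T‖ ^ 2 / αm * (-(ip J f f).re) := quantUp hαm (by positivity) hup hα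
      have h2 : -(‖T‖ ^ 2 / αm) * (ip J f f).re ≤ Bm * (ip J f f).re :=
        mul_le_mul_of_nonpos_right (min_le_left _ _) ht0
      have h3 : ‖T‖ ^ 2 / αm * (-(ip J f f).re) = -(‖T‖ ^ 2 / αm) * (ip J f f).re := by ring
      calc (∑' i : Ineg, v (i : ι) ^ 2 * ‖ip J (pr (W (i : ι)) (J f)) f‖)
          ≤ ‖T‖ ^ 2 / αm * (-(ip J f f).re) := h1
        _ = -(‖T‖ ^ 2 / αm) * (ip J f f).re := h3
        _ ≤ Bm * (ip J f f).re := h2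


end JFF
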